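/- The hypercube Q_5 does not admit a decomposition into copies of the sunlet graph L_16. -/

import Mathlib

/-- The `n`-dimensional hypercube graph `Q_n`: vertices are binary strings of
length `n`, adjacent iff they differ in exactly one coordinate. -/
def hypercube (n : ℕ) : SimpleGraph (Fin n → Bool) where
  Adj x y := ∃! i, x i ≠ y i
  symm := by
    constructor
    rintro x y ⟨i, hi, hu⟩
    exact ⟨i, hi.symm, fun j h => hu j h.symm⟩
  loopless := by
    constructor
    rintro x ⟨i, hi, -⟩
    exact hi rfl

/-- The cycle `C_k` on vertex set `ZMod k`. -/
def cycleGraph (k : ℕ) : SimpleGraph (ZMod k) :=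
  SimpleGraph.fromRel (fun i j => j = i + 1)

/-- The sunlet graph `L_{2k}`: a cycle `C_k` together with a pendant vertex
attached to each cycle vertex. -/
def sunlet (k : ℕ) : SimpleGraph (ZMod k ⊕ ZMod k) :=
  SimpleGraph.fromRel (fun a b =>
    (∃ i : ZMod k, a = Sum.inl i ∧ b = Sum.inl (i + 1)) ∨
    (∃ i : ZMod k, a = Sum.inl i ∧ b = Sum.inr i))

/-- `G` admits a decomposition into copies of `H`: a family of embedded copies of
`H` in `G` such that every edge of `G` lies in exactly one copy. -/
def HasDecomp {V : Type*} {W : Type*} (G : SimpleGraph V) (H : SimpleGraph W) : Prop :=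
  ∃ (ι : Type) (f : ι → (H ↪g G)),
    ∀ e ∈ G.edgeSet, ∃! i : ι, e ∈ Sym2.map (f i) '' H.edgeSet

instance (n : ℕ) : DecidableRel (hypercube n).Adj := fun x y =>
  decidable_of_iff (∃ i, x i ≠ y i ∧ ∀ j, x j ≠ y j → j = i) Iff.rfl

instance (k : ℕ) [NeZero k] : DecidableRel (sunlet k).Adj := fun a b => by
  unfold sunlet
  rw [SimpleGraph.fromRel_adj]
  infer_instance

lemma hyp5_degree : ∀ v, (hypercube 5).degree v = 5 := by decide

lemma sunlet8_nbr_card : ∀ a : ZMod 8, ((sunlet 8).neighborFinset (Sum.inl a)).card = 3 := by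
  decide

lemma sunlet8_edge_card : (sunlet 8).edgeFinset.card = 16 := by decide

lemma hyp5_edge_card : (hypercube 5).edgeFinset.card = 80 := by
  have h := SimpleGraph.sum_degrees_eq_twice_card_edges (hypercube 5)
  simp only [hyp5_degree, Finset.sum_const, smul_eq_mul] at h
  have hc : (Finset.univ : Finset (Fin 5 → Bool)).card = 32 := by decide
  omega

section Main
variable {ι : Type} (f : ι → (sunlet 8 ↪g hypercube 5))

/-- key lemma: a vertex cannot be the image of a cycle vertex in two distinct copies -/
lemma cross (huniq : ∀ e ∈ (hypercube 5).edgeSet,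
    ∃! i : ι, e ∈ Sym2.map (f i) '' (sunlet 8).edgeSet)
    {i j : ι} {a b : ZMod 8} (h : f i (Sum.inl a) = f j (Sum.inl b)) : i = j := by
  by_contra hij
  set v := f i (Sum.inl a) with hv
  set Ni : Finset (Fin 5 → Bool) :=
    ((sunlet 8).neighborFinset (Sum.inl a)).image (f i) with hNi
  set Nj : Finset (Fin 5 → Bool) :=
    ((sunlet 8).neighborFinset (Sum.inl b)).image (f j) with hNj
  have hmem : ∀ (k : ι) (c : ZMod 8), f k (Sum.inl c) = v →
      ∀ w ∈ ((sunlet 8).neighborFinset (Sum.inl c)).image (f k),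
      w ∈ (hypercube 5).neighborFinset v ∧
        s(v, w) ∈ Sym2.map (f k) '' (sunlet 8).edgeSet := by
    intro k c hk w hw
    obtain ⟨u, hu, rfl⟩ := Finset.mem_image.1 hw
    have hadj : (sunlet 8).Adj (Sum.inl c) u := (SimpleGraph.mem_neighborFinset _ _ _).1 hu
    have hadj' : (hypercube 5).Adj v (f k u) := by
      rw [← hk]; exact (f k).map_rel_iff.2 hadj
    refine ⟨(SimpleGraph.mem_neighborFinset _ _ _).2 hadj', ⟨s(Sum.inl c, u), ?_, ?_⟩⟩
    · exact (SimpleGraph.mem_edgeSet _).2 hadj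
    · rw [Sym2.map_pair_eq, hk]
  have hsubi : Ni ⊆ (hypercube 5).neighborFinset v := fun w hw =>
    (hmem i a rfl w hw).1
  have hsubj : Nj ⊆ (hypercube 5).neighborFinset v := fun w hw =>
    (hmem j b h.symm w hw).1
  have hdisj : Disjoint Ni Nj := by
    rw [Finset.disjoint_left]
    intro w hwi hwj
    have h1 := hmem i a rfl w hwi
    have h2 := hmem j b h.symm w hwj
    have he : s(v, w) ∈ (hypercube 5).edgeSet :=
      (SimpleGraph.mem_edgeSet _).2 ((SimpleGraph.mem_neighborFinset _ _ _).1 h1.1)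
    exact hij ((huniq _ he).unique h1.2 h2.2)
  have hci : Ni.card = 3 := by
    rw [hNi, Finset.card_image_of_injective _ (f i).injective, sunlet8_nbr_card]
  have hcj : Nj.card = 3 := by
    rw [hNj, Finset.card_image_of_injective _ (f j).injective, sunlet8_nbr_card]
  have h6 : (Ni ∪ Nj).card = 6 := by
    rw [Finset.card_union_of_disjoint hdisj, hci, hcj]
  have hle : (Ni ∪ Nj).card ≤ (hypercube 5).degree v :=
    Finset.card_le_card (Finset.union_subset hsubi hsubj)
  rw [h6, hyp5_degree] at hle
  omega

end Main

theorem no_L16_decomp_Q5 : ¬ HasDecomp (hypercube 5) (sunlet 8) := by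
  rintro ⟨ι, f, huniq⟩
  -- injectivity of (i, a) ↦ f i (inl a)
  have hinj : Function.Injective (fun p : ι × ZMod 8 => f p.1 (Sum.inl p.2)) := by
    rintro ⟨i, a⟩ ⟨j, b⟩ hp
    simp only at hp
    have hij : i = j := cross f huniq hp
    subst hij
    have := (f i).injective hp
    simp only [Sum.inl.injEq] at this
    exact Prod.ext rfl this
  have : Fintype ι := by
    have : Fintype (ι × ZMod 8) := Fintype.ofInjective _ hinj
    exact Fintype.ofInjective (fun i : ι => (i, (0 : ZMod 8))) (fun i j h => congrArg Prod.fst h)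
  have hcard : Fintype.card ι * 8 ≤ 32 := by
    have h1 := Fintype.card_le_of_injective _ hinj
    rw [Fintype.card_prod] at h1
    have h2 : Fintype.card (ZMod 8) = 8 := by decide
    have h3 : Fintype.card (Fin 5 → Bool) = 32 := by decide
    rw [h2, h3] at h1
    exact h1
  -- edge covering
  have hsub : (hypercube 5).edgeFinset ⊆
      Finset.univ.biUnion (fun i : ι => (sunlet 8).edgeFinset.image (Sym2.map (f i))) := by
    intro e he
    have he' : e ∈ (hypercube 5).edgeSet := SimpleGraph.mem_edgeFinset.1 he
    obtain ⟨i, hi, -⟩ := huniq e he'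
    refine Finset.mem_biUnion.2 ⟨i, Finset.mem_univ _, ?_⟩
    obtain ⟨x, hx, rfl⟩ := hi
    exact Finset.mem_image.2 ⟨x, SimpleGraph.mem_edgeFinset.2 hx, rfl⟩
  have hbound : (hypercube 5).edgeFinset.card ≤ Fintype.card ι * 16 := by
    calc (hypercube 5).edgeFinset.card
        ≤ (Finset.univ.biUnion (fun i : ι =>
            (sunlet 8).edgeFinset.image (Sym2.map (f i)))).card := Finset.card_le_card hsub
      _ ≤ ∑ i : ι, ((sunlet 8).edgeFinset.image (Sym2.map (f i))).card :=
          Finset.card_biUnion_le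
      _ ≤ ∑ _i : ι, 16 := Finset.sum_le_sum (fun i _ => by
          calc ((sunlet 8).edgeFinset.image (Sym2.map (f i))).card
              ≤ (sunlet 8).edgeFinset.card := Finset.card_image_le
            _ = 16 := sunlet8_edge_card)
      _ = Fintype.card ι * 16 := by rw [Finset.sum_const, smul_eq_mul, Fintype.card]
  rw [hyp5_edge_card] at hbound
  omega
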